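/- A complete ∃₁-axiomatizable theory in a language consisting only of unary predicates is the theory of a structure in which every consistent finite Boolean combination of the predicates is realized infinitely often; such a theory admits quantifier elimination. -/

import Mathlib

open FirstOrder Language

universe w

/-- A sentence is existential (`∃₁`) if it is a quantifier-free formula closed by a block of
existential quantifiers. -/
def IsExistentialSentence {L : FirstOrder.Language} (φ : L.Sentence) : Prop :=
  ∃ (n : ℕ) (ψ : L.BoundedFormula Empty n), ψ.IsQF ∧ φ = ψ.exs

/-- A theory is `∃₁`-axiomatizable if it has the same models as some set of existential
sentences. -/
def IsExistentiallyAxiomatized (L : FirstOrder.Language) (T : L.Theory) : Prop :=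
  ∃ A : L.Theory, (∀ φ ∈ A, IsExistentialSentence φ) ∧
    ∀ (M : Type w) [L.Structure M], M ⊨ T ↔ M ⊨ A

/-- In the structure `M`, every finite Boolean combination of the unary predicates that is
realized at all is realized infinitely often. -/
def CombinationsRealizedInfinitely (L : FirstOrder.Language) (M : Type*) [L.Structure M] : Prop :=
  ∀ s t : Finset (L.Relations 1),
    (∃ x : M, (∀ r ∈ s, Structure.RelMap r ![x]) ∧ (∀ r ∈ t, ¬Structure.RelMap r ![x])) →
    {x : M | (∀ r ∈ s, Structure.RelMap r ![x]) ∧ (∀ r ∈ t, ¬Structure.RelMap r ![x])}.Infinite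


open FirstOrder Language

namespace QEAux

open FirstOrder.Language FirstOrder.Language.Structure

inductive Lit (L : Language) (n : ℕ) where
  | eq (b : Bool) (i j : Fin n)
  | rel (b : Bool) (r : L.Relations 1) (i : Fin n)

namespace Lit

variable {L : Language} {n : ℕ} {M : Type*} [L.Structure M]

def eval (xs : Fin n → M) : Lit L n → Prop
  | .eq b i j => (xs i = xs j) ↔ b = true
  | .rel b r i => Structure.RelMap r ![xs i] ↔ b = true

def toFormula : Lit L n → L.BoundedFormula Empty n
  | .eq true i j => (Term.var (Sum.inr i)).bdEqual (Term.var (Sum.inr j))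
  | .eq false i j => ((Term.var (Sum.inr i)).bdEqual (Term.var (Sum.inr j))).not
  | .rel true r i => Relations.boundedFormula r ![Term.var (Sum.inr i)]
  | .rel false r i => (Relations.boundedFormula r ![Term.var (Sum.inr i)]).not

theorem isQF (l : Lit L n) : l.toFormula.IsQF := by
  rcases l with ⟨b,i,j⟩|⟨b,r,i⟩ <;> cases b <;>
  first
    | exact (BoundedFormula.IsAtomic.equal _ _).isQF.not
    | exact (BoundedFormula.IsAtomic.equal _ _).isQF
    | exact (BoundedFormula.IsAtomic.rel _ _).isQF.not
    | exact (BoundedFormula.IsAtomic.rel _ _).isQF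

theorem fun_one (x : M) : (fun _ : Fin 1 => x) = ![x] := by
  funext k; fin_cases k; rfl

theorem realize_toFormula (v : Empty → M) (xs : Fin n → M) (l : Lit L n) :
    l.toFormula.Realize v xs ↔ l.eval xs := by
  rcases l with ⟨b,i,j⟩|⟨b,r,i⟩ <;> cases b <;>
    simp [toFormula, eval, ← fun_one, Term.realize]

def neg : Lit L n → Lit L n
  | .eq b i j => .eq (!b) i j
  | .rel b r i => .rel (!b) r i

theorem eval_neg (xs : Fin n → M) (l : Lit L n) : l.neg.eval xs ↔ ¬ l.eval xs := by
  rcases l with ⟨b,i,j⟩|⟨b,r,i⟩ <;> cases b <;> simp [neg, eval]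

end Lit

abbrev Clause (L : Language) (n : ℕ) := List (Lit L n)
abbrev DNF (L : Language) (n : ℕ) := List (Clause L n)

namespace Clause

variable {L : Language} {n : ℕ} {M : Type*} [L.Structure M]

def eval (xs : Fin n → M) (c : Clause L n) : Prop := ∀ l ∈ c, l.eval xs

def toFormula : Clause L n → L.BoundedFormula Empty n
  | [] => ⊤
  | l :: c => l.toFormula ⊓ toFormula c

theorem isQF : ∀ c : Clause L n, c.toFormula.IsQF
  | [] => BoundedFormula.IsQF.top
  | l :: c => l.isQF.inf (isQF c)

theorem realize (v : Empty → M) (xs : Fin n → M) :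
    ∀ c : Clause L n, c.toFormula.Realize v xs ↔ c.eval xs
  | [] => by simp [toFormula, eval]
  | l :: c => by
      simp [toFormula, eval, Lit.realize_toFormula v xs l, realize v xs c]

end Clause

namespace DNF

variable {L : Language} {n : ℕ} {M : Type*} [L.Structure M]

def eval (xs : Fin n → M) (d : DNF L n) : Prop := ∃ c ∈ d, c.eval xs

def toFormula : DNF L n → L.BoundedFormula Empty n
  | [] => ⊥
  | c :: d => c.toFormula ⊔ toFormula d

theorem isQF : ∀ d : DNF L n, d.toFormula.IsQF
  | [] => BoundedFormula.isQF_bot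
  | c :: d => (Clause.isQF c).sup (isQF d)

theorem realize (v : Empty → M) (xs : Fin n → M) :
    ∀ d : DNF L n, d.toFormula.Realize v xs ↔ d.eval xs
  | [] => by simp [toFormula, eval]
  | c :: d => by
      simp [toFormula, eval, Clause.realize v xs c, realize v xs d]

theorem eval_append (xs : Fin n → M) (d₁ d₂ : DNF L n) :
    (d₁ ++ d₂).eval xs ↔ d₁.eval xs ∨ d₂.eval xs := by
  simp [eval, or_and_right, exists_or]

def dAnd (d₁ d₂ : DNF L n) : DNF L n := d₁.flatMap fun c₁ => d₂.map fun c₂ => c₁ ++ c₂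

theorem eval_dAnd (xs : Fin n → M) (d₁ d₂ : DNF L n) :
    (dAnd d₁ d₂).eval xs ↔ d₁.eval xs ∧ d₂.eval xs := by
  simp only [dAnd, eval, List.mem_flatMap, List.mem_map, Clause.eval]
  constructor
  · rintro ⟨c, ⟨c₁, hc₁, c₂, hc₂, rfl⟩, h⟩
    exact ⟨⟨c₁, hc₁, fun l hl => h l (by simp [hl])⟩, ⟨c₂, hc₂, fun l hl => h l (by simp [hl])⟩⟩
  · rintro ⟨⟨c₁, hc₁, h₁⟩, ⟨c₂, hc₂, h₂⟩⟩
    refine ⟨c₁ ++ c₂, ⟨c₁, hc₁, c₂, hc₂, rfl⟩, fun l hl => ?_⟩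
    rcases List.mem_append.1 hl with h | h
    · exact h₁ l h
    · exact h₂ l h

def dNot : DNF L n → DNF L n
  | [] => [([] : Clause L n)]
  | c :: d => dAnd (c.map fun l => [l.neg]) (dNot d)

theorem eval_dNot (xs : Fin n → M) : ∀ d : DNF L n, (dNot d).eval xs ↔ ¬ d.eval xs
  | [] => by simp [dNot, eval, Clause.eval]
  | c :: d => by
      rw [dNot, eval_dAnd, eval_dNot xs d]
      simp only [eval, Clause.eval, List.mem_cons, List.mem_map]
      constructor
      · rintro ⟨⟨c', ⟨l, hl, rfl⟩, h⟩, hd⟩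
        rintro ⟨c₀, (rfl | hc₀), h₀⟩
        · exact (Lit.eval_neg xs l).1 (h _ (by simp)) (h₀ l hl)
        · exact hd ⟨c₀, hc₀, h₀⟩
      · intro h
        push_neg at h
        obtain ⟨l, hl, hnl⟩ := h c (Or.inl rfl)
        refine ⟨⟨[l.neg], ⟨l, hl, rfl⟩, ?_⟩, ?_⟩
        · intro l' hl'
          simp only [List.mem_singleton] at hl'
          subst hl'
          exact (Lit.eval_neg xs l).2 hnl
        · rintro ⟨c₀, hc₀, h₀⟩
          obtain ⟨l₀, hl₀, hnl₀⟩ := h c₀ (Or.inr hc₀)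
          exact hnl₀ (h₀ l₀ hl₀)

end DNF

end QEAux
namespace QEAux

open FirstOrder.Language

variable {L : Language} {n : ℕ}

theorem term_eq_var [L.IsRelational] (t : L.Term (Empty ⊕ Fin n)) :
    ∃ i : Fin n, t = Term.var (Sum.inr i) := by
  cases t with
  | var s =>
    cases s with
    | inl e => exact e.elim
    | inr i => exact ⟨i, rfl⟩
  | func f ts => exact isEmptyElim f

theorem exists_dnf [L.IsRelational] (hun : ∀ m, m ≠ 1 → IsEmpty (L.Relations m))
    {φ : L.BoundedFormula Empty n} (h : φ.IsQF) :
    ∃ d : DNF L n, ∀ (M : Type w) [L.Structure M] (v : Empty → M) (xs : Fin n → M),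
      φ.Realize v xs ↔ d.eval xs := by
  induction h with
  | falsum => exact ⟨[], by intro M _ v xs; simp [DNF.eval, BoundedFormula.Realize]⟩
  | of_isAtomic h =>
    cases h with
    | equal t₁ t₂ =>
      obtain ⟨i, rfl⟩ := term_eq_var t₁
      obtain ⟨j, rfl⟩ := term_eq_var t₂
      refine ⟨[([Lit.eq true i j] : Clause L n)], fun M _ v xs => ?_⟩
      simp [DNF.eval, Clause.eval, Lit.eval, Term.realize]
    | @rel k R ts =>
      match k, R with
      | 1, R =>
        obtain ⟨i, hi⟩ := term_eq_var (ts 0)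
        refine ⟨[([Lit.rel true R i] : Clause L n)], fun M _ v xs => ?_⟩
        have hts : ts = fun _ : Fin 1 => Term.var (Sum.inr i) := by
          funext k
          rw [Subsingleton.elim k 0, hi]
        subst hts
        simp [DNF.eval, Clause.eval, Lit.eval, Term.realize, ← Lit.fun_one]
      | 0, R => exact (hun 0 (by omega)).elim R
      | (k+2), R => exact (hun _ (by omega)).elim R
  | imp h₁ h₂ ih₁ ih₂ =>
    obtain ⟨d₁, hd₁⟩ := ih₁
    obtain ⟨d₂, hd₂⟩ := ih₂
    refine ⟨DNF.dNot d₁ ++ d₂, fun M _ v xs => ?_⟩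
    rw [BoundedFormula.realize_imp, hd₁ M v xs, hd₂ M v xs, DNF.eval_append,
      DNF.eval_dNot, imp_iff_not_or]

theorem DNF.eval_congr {M M' : Type*} [L.Structure M] [L.Structure M']
    {xs : Fin n → M} {xs' : Fin n → M'}
    (heq : ∀ i j, xs i = xs j ↔ xs' i = xs' j)
    (hrel : ∀ (r : L.Relations 1) (i : Fin n),
      Structure.RelMap r ![xs i] ↔ Structure.RelMap r ![xs' i])
    (d : DNF L n) : d.eval xs ↔ d.eval xs' := by
  unfold DNF.eval Clause.eval
  refine exists_congr fun c => and_congr_right fun _ => forall₂_congr fun l _ => ?_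
  rcases l with ⟨b,i,j⟩|⟨b,r,i⟩ <;> simp [Lit.eval, heq, hrel]

end QEAux
namespace QEAux

open FirstOrder.Language

variable {L : Language} {n : ℕ} {M : Type*} [L.Structure M]

def squash (j : Fin n) (i : Fin (n+1)) : Fin n :=
  if h : i = Fin.last n then j else i.castPred h

theorem snoc_of_ne {xs : Fin n → M} {x : M} {i : Fin (n+1)} (hi : i ≠ Fin.last n) :
    (Fin.snoc xs x : Fin (n+1) → M) i = xs (i.castPred hi) := by
  conv_lhs => rw [← Fin.castSucc_castPred i hi]
  rw [Fin.snoc_castSucc]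

theorem snoc_squash (xs : Fin n → M) (j : Fin n) (i : Fin (n+1)) :
    (Fin.snoc xs (xs j) : Fin (n+1) → M) i = xs (squash j i) := by
  unfold squash
  split
  · next h => subst h; simp
  · next h => exact snoc_of_ne h

namespace Lit

def subst (j : Fin n) : Lit L (n+1) → Lit L n
  | .eq b i₁ i₂ => .eq b (squash j i₁) (squash j i₂)
  | .rel b r i => .rel b r (squash j i)

theorem eval_subst (xs : Fin n → M) (j : Fin n) (l : Lit L (n+1)) :
    (l.subst j).eval xs ↔ l.eval (Fin.snoc xs (xs j)) := by
  rcases l with ⟨b,i₁,i₂⟩|⟨b,r,i⟩ <;> simp [subst, eval, snoc_squash]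

def restrict : Lit L (n+1) → Option (Lit L n)
  | .eq b i j =>
    if hi : i = Fin.last n then none
    else if hj : j = Fin.last n then none
    else some (.eq b (i.castPred hi) (j.castPred hj))
  | .rel b r i => if hi : i = Fin.last n then none else some (.rel b r (i.castPred hi))

def comboOf : Lit L (n+1) → Option (L.Relations 1 × Bool)
  | .rel b r i => if i = Fin.last n then some (r, b) else none
  | .eq _ _ _ => none

def diseqOf : Lit L (n+1) → Option (Fin n)
  | .eq false i j =>
    if hi : i = Fin.last n then (if hj : j = Fin.last n then none else some (j.castPred hj))
    else if hj : j = Fin.last n then some (i.castPred hi) else none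
  | .eq true _ _ => none
  | .rel _ _ _ => none

theorem eval_restrict {l : Lit L (n+1)} {l' : Lit L n} (h : l.restrict = some l')
    (xs : Fin n → M) (x : M) : l'.eval xs ↔ l.eval (Fin.snoc xs x) := by
  rcases l with ⟨b,i,j⟩|⟨b,r,i⟩ <;> simp only [restrict] at h <;>
    split_ifs at h with h1 h2 <;> rw [Option.some_inj] at h <;> subst h <;>
    simp [eval, snoc_of_ne, *]

theorem eval_comboOf {l : Lit L (n+1)} {p : L.Relations 1 × Bool} (h : l.comboOf = some p)
    (xs : Fin n → M) (x : M) :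
    l.eval (Fin.snoc xs x) ↔ (Structure.RelMap p.1 ![x] ↔ p.2 = true) := by
  rcases l with ⟨b,i,j⟩|⟨b,r,i⟩ <;> simp only [comboOf] at h
  · exact absurd h (by simp)
  · split_ifs at h with h1
    rw [Option.some_inj] at h
    subst h h1
    simp [eval, Fin.snoc_last]

theorem eval_diseqOf {l : Lit L (n+1)} {j : Fin n} (h : l.diseqOf = some j)
    (xs : Fin n → M) (x : M) :
    l.eval (Fin.snoc xs x) ↔ ¬ x = xs j := by
  rcases l with ⟨b,i₁,i₂⟩|⟨b,r,i⟩
  · cases b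
    · simp only [diseqOf] at h
      split_ifs at h with h1 h2 h3 <;> rw [Option.some_inj] at h <;> subst h
      · subst h1
        simp [eval, Fin.snoc_last, snoc_of_ne h2]
      · subst h3
        simp [eval, Fin.snoc_last, snoc_of_ne h1, eq_comm]
    · exact absurd h (by simp [diseqOf])
  · exact absurd h (by simp [diseqOf])

theorem classify (l : Lit L (n+1)) :
    (∃ l', l.restrict = some l') ∨ (∃ p, l.comboOf = some p) ∨ (∃ j, l.diseqOf = some j)
    ∨ l = .eq true (Fin.last n) (Fin.last n) ∨ l = .eq false (Fin.last n) (Fin.last n)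
    ∨ (∃ i, i ≠ Fin.last n ∧ (l = .eq true (Fin.last n) i ∨ l = .eq true i (Fin.last n))) := by
  rcases l with ⟨b,i,j⟩|⟨b,r,i⟩
  · by_cases hi : i = Fin.last n <;> by_cases hj : j = Fin.last n <;> cases b <;>
      subst_vars <;>
      simp [restrict, comboOf, diseqOf, *]
  · by_cases hi : i = Fin.last n <;> simp [restrict, comboOf, diseqOf, *]

end Lit

theorem clause_decomp (c : Clause L (n+1))
    (h1 : ∀ i, i ≠ Fin.last n →
      Lit.eq true (Fin.last n) i ∉ c ∧ Lit.eq true i (Fin.last n) ∉ c)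
    (h0 : Lit.eq false (Fin.last n) (Fin.last n) ∉ c)
    (xs : Fin n → M) (x : M) :
    c.eval (Fin.snoc xs x) ↔
      (Clause.eval xs (c.filterMap Lit.restrict) ∧
       (∀ p ∈ c.filterMap Lit.comboOf, (Structure.RelMap p.1 ![x] ↔ p.2 = true)) ∧
       (∀ j ∈ c.filterMap Lit.diseqOf, ¬ x = xs j)) := by
  constructor
  · intro h
    refine ⟨fun l' hl' => ?_, fun p hp => ?_, fun j hj => ?_⟩
    · obtain ⟨l, hl, hsome⟩ := List.mem_filterMap.1 hl'
      exact (Lit.eval_restrict hsome xs x).2 (h l hl)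
    · obtain ⟨l, hl, hsome⟩ := List.mem_filterMap.1 hp
      exact (Lit.eval_comboOf hsome xs x).1 (h l hl)
    · obtain ⟨l, hl, hsome⟩ := List.mem_filterMap.1 hj
      exact (Lit.eval_diseqOf hsome xs x).1 (h l hl)
  · rintro ⟨hr, hc, hd⟩ l hl
    rcases Lit.classify l with ⟨l', hs⟩ | ⟨p, hs⟩ | ⟨j, hs⟩ | rfl | rfl | ⟨i, hi, hcases⟩
    · exact (Lit.eval_restrict hs xs x).1 (hr l' (List.mem_filterMap.2 ⟨l, hl, hs⟩))
    · exact (Lit.eval_comboOf hs xs x).2 (hc p (List.mem_filterMap.2 ⟨l, hl, hs⟩))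
    · exact (Lit.eval_diseqOf hs xs x).2 (hd j (List.mem_filterMap.2 ⟨l, hl, hs⟩))
    · simp [Lit.eval]
    · exact absurd hl h0
    · rcases hcases with rfl | rfl
      · exact absurd hl ((h1 i hi).1)
      · exact absurd hl ((h1 i hi).2)

end QEAux
namespace QEAux

open FirstOrder.Language

variable {L : Language} {M : Type*} [L.Structure M]

/-- A clause expressing that `m` distinct elements each satisfy the combination `combo`. -/
def comboClause (combo : List (L.Relations 1 × Bool)) (m : ℕ) : Clause L m :=
  ((List.finRange m).flatMap fun i => combo.map fun p => Lit.rel p.2 p.1 i) ++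
  ((List.finRange m).flatMap fun i => (List.finRange m).flatMap fun j =>
    if i = j then [] else [Lit.eq false i j])

theorem eval_comboClause {combo : List (L.Relations 1 × Bool)} {m : ℕ} (xs : Fin m → M) :
    Clause.eval xs (comboClause combo m) ↔
      ((∀ i, ∀ p ∈ combo, (Structure.RelMap p.1 ![xs i] ↔ p.2 = true)) ∧
        Function.Injective xs) := by
  constructor
  · intro h
    constructor
    · intro i p hp
      have hmem : Lit.rel p.2 p.1 i ∈ comboClause combo m := by
        apply List.mem_append_left
        exact List.mem_flatMap.2 ⟨i, List.mem_finRange i, List.mem_map.2 ⟨p, hp, rfl⟩⟩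
      exact h _ hmem
    · intro i j hij
      by_contra hne
      have hmem : Lit.eq false i j ∈ comboClause combo m := by
        apply List.mem_append_right
        refine List.mem_flatMap.2 ⟨i, List.mem_finRange i, ?_⟩
        refine List.mem_flatMap.2 ⟨j, List.mem_finRange j, ?_⟩
        simp [if_neg hne]
      have := h _ hmem
      simp only [Lit.eval] at this
      exact absurd hij (by simpa using this)
  · rintro ⟨hcombo, hinj⟩ l hl
    rcases List.mem_append.1 hl with hl | hl
    · obtain ⟨i, -, hl⟩ := List.mem_flatMap.1 hl
      obtain ⟨p, hp, rfl⟩ := List.mem_map.1 hl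
      exact hcombo i p hp
    · obtain ⟨i, -, hl⟩ := List.mem_flatMap.1 hl
      obtain ⟨j, -, hl⟩ := List.mem_flatMap.1 hl
      split_ifs at hl with hij
      · simp at hl
      · simp only [List.mem_singleton] at hl
        subst hl
        simp only [Lit.eval]
        simp only [Bool.false_eq_true, iff_false]
        exact fun hxy => hij (hinj hxy)

/-- Bridge between list-combination conditions and finset conditions. -/
theorem combo_finsets [DecidableEq (L.Relations 1)]
    (combo : List (L.Relations 1 × Bool)) (y : M) :
    (∀ p ∈ combo, (Structure.RelMap p.1 ![y] ↔ p.2 = true)) ↔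
      ((∀ r ∈ (combo.filterMap fun p => if p.2 then some p.1 else none).toFinset,
          Structure.RelMap r ![y]) ∧
       (∀ r ∈ (combo.filterMap fun p => if p.2 then none else some p.1).toFinset,
          ¬ Structure.RelMap r ![y])) := by
  constructor
  · intro h
    constructor
    · intro r hr
      rw [List.mem_toFinset, List.mem_filterMap] at hr
      obtain ⟨p, hp, hif⟩ := hr
      rcases hb : p.2 with _ | _ <;> rw [hb] at hif <;>
        simp only [if_true, if_false, Option.some_inj, reduceCtorEq] at hif
      subst hif
      exact (h p hp).2 hb
    · intro r hr
      rw [List.mem_toFinset, List.mem_filterMap] at hr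
      obtain ⟨p, hp, hif⟩ := hr
      rcases hb : p.2 with _ | _ <;> rw [hb] at hif <;>
        simp only [if_true, if_false, Option.some_inj, reduceCtorEq] at hif
      subst hif
      intro hry
      have := (h p hp).1 hry
      rw [hb] at this
      cases this
  · rintro ⟨hs, ht⟩ p hp
    rcases hb : p.2
    · simp only [Bool.false_eq_true, iff_false]
      apply ht
      rw [List.mem_toFinset, List.mem_filterMap]
      exact ⟨p, hp, by rw [hb]; simp⟩
    · simp only [iff_true]
      apply hs
      rw [List.mem_toFinset, List.mem_filterMap]
      exact ⟨p, hp, by rw [hb]; simp⟩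

end QEAux
namespace QEAux

open FirstOrder.Language FirstOrder.Language.Theory

variable {L : Language}

theorem clause_ex_elim [L.IsRelational] {T : L.Theory} (hT : T.IsComplete)
    (M₀ : Type) [L.Structure M₀] [Nonempty M₀] [M₀ ⊨ T]
    (hInf : CombinationsRealizedInfinitely L M₀)
    {n : ℕ} (c : Clause L (n+1)) :
    ∃ d : DNF L n, ∀ (N : Type w) [L.Structure N] [Nonempty N], N ⊨ T → ∀ (xs : Fin n → N),
      ((∃ x, Clause.eval (Fin.snoc xs x) c) ↔ DNF.eval xs d) := by
  classical
  by_cases hC1 : ∃ i, i ≠ Fin.last n ∧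
      (Lit.eq true (Fin.last n) i ∈ c ∨ Lit.eq true i (Fin.last n) ∈ c)
  · obtain ⟨i, hi, hmem⟩ := hC1
    refine ⟨[c.map (Lit.subst (i.castPred hi))], ?_⟩
    intro N _ _ _ xs
    set j := i.castPred hi with hjdef
    have hsub : ∀ x : N, Clause.eval (Fin.snoc xs x) c → x = xs j := by
      intro x hx
      rcases hmem with hm | hm
      · have h := hx _ hm
        simp only [Lit.eval, Fin.snoc_last, iff_true] at h
        rw [h, snoc_of_ne hi]
      · have h := hx _ hm
        simp only [Lit.eval, Fin.snoc_last, iff_true] at h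
        rw [← h, snoc_of_ne hi]
    constructor
    · rintro ⟨x, hx⟩
      have hxj := hsub x hx
      rw [hxj] at hx
      refine ⟨_, List.mem_singleton_self _, ?_⟩
      intro l' hl'
      obtain ⟨l, hl, rfl⟩ := List.mem_map.1 hl'
      exact (Lit.eval_subst xs j l).2 (hx l hl)
    · rintro ⟨c', hc', h⟩
      simp only [List.mem_singleton] at hc'
      subst hc'
      refine ⟨xs j, fun l hl => ?_⟩
      exact (Lit.eval_subst xs j l).1 (h _ (List.mem_map.2 ⟨l, hl, rfl⟩))
  by_cases hC0 : Lit.eq false (Fin.last n) (Fin.last n) ∈ c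
  · refine ⟨[], ?_⟩
    intro N _ _ _ xs
    constructor
    · rintro ⟨x, hx⟩
      have h := hx _ hC0
      simp [Lit.eval] at h
    · rintro ⟨c', hc', -⟩
      cases hc'
  -- main case
  push_neg at hC1
  have hC1' : ∀ i, i ≠ Fin.last n →
      Lit.eq true (Fin.last n) i ∉ c ∧ Lit.eq true i (Fin.last n) ∉ c := hC1
  set combo := c.filterMap Lit.comboOf with hcombo
  set D := c.filterMap Lit.diseqOf with hD
  set rest := c.filterMap Lit.restrict with hrest
  set k := D.length with hk
  by_cases hbig : M₀ ⊨ ((Clause.toFormula (comboClause combo (k+1))).exs)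
  · refine ⟨[rest], ?_⟩
    intro N iN nN hN xs
    haveI := hN
    have hTbig := (hT.realize_sentence_iff _ M₀).1 hbig
    have hNbig : N ⊨ (Clause.toFormula (comboClause combo (k+1))).exs :=
      hTbig.realize_sentence N
    obtain ⟨ys, hys⟩ := BoundedFormula.realize_exs.1 hNbig
    rw [Clause.realize, eval_comboClause] at hys
    constructor
    · rintro ⟨x, hx⟩
      exact ⟨rest, List.mem_singleton_self _,
        ((clause_decomp c hC1' hC0 xs x).1 hx).1⟩
    · rintro ⟨c', hc', hrestxs⟩
      simp only [List.mem_singleton] at hc'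
      subst hc'
      have hbadcard : (D.map xs).toFinset.card ≤ k := by
        refine le_trans (List.toFinset_card_le _) ?_
        simp [hk]
      obtain ⟨i0, hi0⟩ : ∃ i0 : Fin (k+1), ys i0 ∉ (D.map xs).toFinset := by
        by_contra hcon
        push_neg at hcon
        have hcard := Finset.card_le_card_of_injOn (s := (Finset.univ : Finset (Fin (k+1)))) (t := (D.map xs).toFinset) ys (fun a _ => hcon a) hys.2.injOn
        simp only [Finset.card_univ, Fintype.card_fin] at hcard
        omega
      refine ⟨ys i0, (clause_decomp c hC1' hC0 xs (ys i0)).2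
        ⟨hrestxs, fun p hp => hys.1 i0 p hp, fun j hjD => ?_⟩⟩
      intro hxeq
      exact hi0 (List.mem_toFinset.2 (List.mem_map.2 ⟨j, hjD, hxeq.symm⟩))
  · refine ⟨[], ?_⟩
    intro N iN nN hN xs
    haveI := hN
    constructor
    · rintro ⟨x, hx⟩
      exfalso
      have hdec := (clause_decomp c hC1' hC0 xs x).1 hx
      have hN1 : N ⊨ (Clause.toFormula (comboClause combo 1)).exs := by
        refine BoundedFormula.realize_exs.2 ⟨fun _ => x, (Clause.realize _ _ _).2
          ((eval_comboClause _).2 ⟨fun i p hp => hdec.2.1 p hp, fun a b _ => Subsingleton.elim a b⟩)⟩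
      have hM1 : M₀ ⊨ (Clause.toFormula (comboClause combo 1)).exs :=
        ((hT.realize_sentence_iff _ N).1 hN1).realize_sentence M₀
      apply hbig
      obtain ⟨y1, hy1⟩ := BoundedFormula.realize_exs.1 hM1
      rw [Clause.realize, eval_comboClause] at hy1
      have hx₀ : ∀ p ∈ combo, Structure.RelMap p.1 ![y1 0] ↔ p.2 = true :=
        fun p hp => hy1.1 0 p hp
      have hsets := (combo_finsets combo (y1 0)).1 hx₀
      have hinf := hInf _ _ ⟨y1 0, hsets⟩
      obtain ⟨t', ht'sub, ht'card⟩ := hinf.exists_subset_card_eq (k+1)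
      have e := t'.equivFinOfCardEq ht'card
      refine BoundedFormula.realize_exs.2 ⟨fun i => (e.symm i : M₀), (Clause.realize _ _ _).2
        ((eval_comboClause _).2 ⟨?_, ?_⟩)⟩
      · intro i p hp
        have hmem := ht'sub (e.symm i).2
        exact (combo_finsets combo _).2 ⟨hmem.1, hmem.2⟩ p hp
      · intro a b hab
        exact e.symm.injective (Subtype.ext hab)
    · rintro ⟨c', hc', -⟩
      cases hc'

theorem dnf_ex_elim [L.IsRelational] {T : L.Theory} (hT : T.IsComplete)
    (M₀ : Type) [L.Structure M₀] [Nonempty M₀] [M₀ ⊨ T]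
    (hInf : CombinationsRealizedInfinitely L M₀)
    {n : ℕ} (d : DNF L (n+1)) :
    ∃ d' : DNF L n, ∀ (N : Type w) [L.Structure N] [Nonempty N], N ⊨ T → ∀ (xs : Fin n → N),
      ((∃ x, DNF.eval (Fin.snoc xs x) d) ↔ DNF.eval xs d') := by
  induction d with
  | nil => exact ⟨[], by intro N _ _ _ xs; simp [DNF.eval]⟩
  | cons c d ih =>
    obtain ⟨dc, hdc⟩ := clause_ex_elim hT M₀ hInf c
    obtain ⟨dd, hdd⟩ := ih
    refine ⟨dc ++ dd, ?_⟩
    intro N iN nN hN xs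
    rw [DNF.eval_append, ← hdc N hN xs, ← hdd N hN xs]
    constructor
    · rintro ⟨x, c', hc', h⟩
      rcases List.mem_cons.1 hc' with rfl | hc'
      · exact Or.inl ⟨x, h⟩
      · exact Or.inr ⟨x, c', hc', h⟩
    · rintro (⟨x, h⟩ | ⟨x, c', hc', h⟩)
      · exact ⟨x, c, List.mem_cons_self, h⟩
      · exact ⟨x, c', List.mem_cons_of_mem c hc', h⟩

end QEAux
namespace QEAux

open FirstOrder.Language

variable {L : Language}

/-- The set of (codes of) unary predicates satisfied by an element. -/
def pat (enc : L.Relations 1 → ℕ) {M₁ : Type*} [L.Structure M₁] (a : M₁) : Set ℕ :=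
  {m | ∃ r : L.Relations 1, enc r = m ∧ Structure.RelMap r ![a]}

/-- A small structure realizing exactly the predicate-patterns of `M₁`, each infinitely often. -/
structure PatModel (enc : L.Relations 1 → ℕ) (M₁ : Type*) [L.Structure M₁] : Type where
  s : Set ℕ
  hs : s ∈ Set.range (pat enc (M₁ := M₁))
  k : ℕ

def patStructure [L.IsRelational] (hun : ∀ m, m ≠ 1 → IsEmpty (L.Relations m))
    (enc : L.Relations 1 → ℕ) (M₁ : Type*) [L.Structure M₁] :
    L.Structure (PatModel enc M₁) where
  funMap {m} f _ := isEmptyElim f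
  RelMap {m} r y :=
    match m, r, y with
    | 1, r, y => enc r ∈ (y 0).s
    | 0, r, _ => ((hun 0 (by omega)).elim r)
    | (m+2), r, _ => ((hun (m+2) (by omega)).elim r)

theorem patStructure_relMap [L.IsRelational] (hun : ∀ m, m ≠ 1 → IsEmpty (L.Relations m))
    (enc : L.Relations 1 → ℕ) (M₁ : Type*) [L.Structure M₁] (r : L.Relations 1)
    (z : PatModel enc M₁) :
    (patStructure hun enc M₁).RelMap r ![z] ↔ enc r ∈ z.s := by
  show enc r ∈ ((![z] : Fin 1 → PatModel enc M₁) 0).s ↔ _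
  rw [Matrix.cons_val_zero]

end QEAux

open QEAux

/-- a complete `∃₁`-axiomatizable theory in a language consisting only of
(countably many) unary predicates is the theory of a structure in which every realized finite
Boolean combination of the predicates is realized infinitely often, and it admits quantifier
elimination. -/
theorem complete_existential_unary_theory (L : FirstOrder.Language) [L.IsRelational]
    [Countable (L.Relations 1)] (hun : ∀ n, n ≠ 1 → IsEmpty (L.Relations n))
    (T : L.Theory) (hT : T.IsComplete) (hax : IsExistentiallyAxiomatized.{0} L T) :
    (∃ (M : Type) (_ : L.Structure M),
      CombinationsRealizedInfinitely L M ∧ M ⊨ T) ∧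
    (∀ (n : ℕ) (φ : L.BoundedFormula Empty n),
      ∃ ψ : L.BoundedFormula Empty n, ψ.IsQF ∧ Theory.Iff T φ ψ) := by
  classical
  obtain ⟨A, hA, hiff⟩ := hax
  -- the language is countable
  haveI hcr : ∀ m, Countable (L.Relations m) := by
    intro m
    rcases eq_or_ne m 1 with rfl | hm
    · infer_instance
    · haveI := hun m hm; infer_instance
  haveI : Countable (Σ l, L.Relations l) := inferInstance
  haveI : Countable (Σ l, L.Functions l) := inferInstance
  haveI : Countable L.Symbols := by
    unfold Language.Symbols
    infer_instance
  have hcard : L.card ≤ Cardinal.aleph0 := Cardinal.mk_le_aleph0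
  -- a model of T in `Type 0`
  obtain ⟨M₁⟩ : Nonempty (Theory.ModelType.{_, _, 0} T) := by
    obtain ⟨N⟩ := hT.1
    rcases finite_or_infinite N with hfin | hinf
    · haveI : Small.{0} N := Countable.toSmall _
      exact ⟨N.shrink⟩
    · obtain ⟨N₀, -⟩ := Theory.exists_model_card_eq ⟨N, hinf⟩ Cardinal.aleph0 le_rfl
        (by simpa using hcard)
      exact ⟨N₀⟩
  have hM₁A : M₁ ⊨ A := (hiff M₁).1 M₁.is_model
  obtain ⟨enc, henc⟩ := Countable.exists_injective_nat (L.Relations 1)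
  -- the pattern model
  let M₀ : Type := PatModel enc (M₁ : Type 0)
  letI iM₀ : L.Structure M₀ := patStructure hun enc (M₁ : Type 0)
  haveI : Nonempty M₀ := ⟨⟨pat enc (Classical.arbitrary M₁), Set.mem_range_self _, 0⟩⟩
  have hrel₀ : ∀ (r : L.Relations 1) (z : M₀), Structure.RelMap r ![z] ↔ enc r ∈ z.s :=
    patStructure_relMap hun enc (M₁ : Type 0)
  have hpat : ∀ (r : L.Relations 1) (a : M₁), enc r ∈ pat enc a ↔ Structure.RelMap r ![a] := by
    intro r a
    constructor
    · rintro ⟨r', hr', hRel⟩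
      rwa [henc hr'] at hRel
    · intro h
      exact ⟨r, rfl, h⟩
  -- M₀ models A, hence T
  have hM₀A : M₀ ⊨ A := by
    rw [Theory.model_iff]
    intro φ hφ
    haveI : (M₁ : Type 0) ⊨ A := hM₁A
    obtain ⟨m, ψ, hQF, rfl⟩ := hA φ hφ
    have hM₁φ : M₁ ⊨ ψ.exs := Theory.realize_sentence_of_mem A hφ
    obtain ⟨xs, hxs⟩ := BoundedFormula.realize_exs.1 hM₁φ
    obtain ⟨d, hd⟩ := exists_dnf hun hQF
    have hdx : DNF.eval xs d := (hd (M₁ : Type 0) default xs).1 hxs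
    have hne : ∀ i : Fin m, (Finset.univ.filter fun j => xs j = xs i).Nonempty :=
      fun i => ⟨i, by simp⟩
    let idx : Fin m → Fin m := fun i => (Finset.univ.filter fun j => xs j = xs i).min' (hne i)
    have hidx_eq : ∀ i, xs (idx i) = xs i := by
      intro i
      have := Finset.min'_mem _ (hne i)
      simpa using this
    let xs' : Fin m → M₀ := fun i => ⟨pat enc (xs i), Set.mem_range_self _, (idx i : ℕ)⟩
    have heq : ∀ i j, xs i = xs j ↔ xs' i = xs' j := by
      intro i j
      constructor
      · intro h
        have hset : (Finset.univ.filter fun a => xs a = xs i) =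
            (Finset.univ.filter fun a => xs a = xs j) := by
          apply Finset.filter_congr
          intro a _
          rw [h]
        have h2 : idx i = idx j := by
          simp only [idx, hset]
        simp only [xs', PatModel.mk.injEq, h2, h, and_self]
      · intro h
        have h2 : (idx i : ℕ) = (idx j : ℕ) := congrArg PatModel.k h
        have h3 : idx i = idx j := Fin.val_injective h2
        rw [← hidx_eq i, ← hidx_eq j, h3]
    have hrelc : ∀ (r : L.Relations 1) (i : Fin m),
        Structure.RelMap r ![xs i] ↔ Structure.RelMap r ![xs' i] := by
      intro r i
      rw [hrel₀ r (xs' i)]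
      exact ((hpat r (xs i)).symm)
    have hdx' : DNF.eval xs' d := (DNF.eval_congr heq hrelc d).1 hdx
    exact BoundedFormula.realize_exs.2 ⟨xs', (hd M₀ default xs').2 hdx'⟩
  haveI hM₀T : M₀ ⊨ T := (hiff M₀).2 hM₀A
  -- every realized combination is realized infinitely often in M₀
  have hInf : CombinationsRealizedInfinitely L M₀ := by
    rintro s t ⟨x, hx⟩
    apply Set.infinite_of_injective_forall_mem (f := fun m : ℕ => (⟨x.s, x.hs, m⟩ : M₀))
    · intro a b hab
      simpa [PatModel.mk.injEq] using hab
    · intro m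
      have key : ∀ r : L.Relations 1,
          Structure.RelMap r ![(⟨x.s, x.hs, m⟩ : M₀)] ↔ Structure.RelMap r ![x] := by
        intro r
        rw [hrel₀ r ⟨x.s, x.hs, m⟩, hrel₀ r x]
      exact ⟨fun r hr => (key r).2 (hx.1 r hr), fun r hr h => hx.2 r hr ((key r).1 h)⟩
  refine ⟨⟨M₀, iM₀, hInf, hM₀T⟩, ?_⟩
  -- quantifier elimination
  intro n φ
  induction φ with
  | falsum => exact ⟨_, BoundedFormula.IsQF.falsum, Theory.Iff.refl _⟩
  | equal t₁ t₂ => exact ⟨_, (BoundedFormula.IsAtomic.equal t₁ t₂).isQF, Theory.Iff.refl _⟩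
  | rel R ts => exact ⟨_, (BoundedFormula.IsAtomic.rel R ts).isQF, Theory.Iff.refl _⟩
  | imp φ₁ φ₂ ih₁ ih₂ =>
    obtain ⟨ψ₁, h₁, e₁⟩ := ih₁
    obtain ⟨ψ₂, h₂, e₂⟩ := ih₂
    exact ⟨ψ₁.imp ψ₂, h₁.imp h₂, e₁.imp e₂⟩
  | all φ ih =>
    obtain ⟨ψ, hψ, eψ⟩ := ih
    obtain ⟨d, hd⟩ := exists_dnf hun hψ.not
    obtain ⟨d', hd'⟩ := dnf_ex_elim hT M₀ hInf d
    refine ⟨(DNF.toFormula d').not, (DNF.isQF d').not, ?_⟩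
    simp only [Theory.Iff, Theory.ModelsBoundedFormula]
    intro N v xs
    rw [BoundedFormula.realize_iff, BoundedFormula.realize_all, BoundedFormula.realize_not,
      DNF.realize, ← hd' N N.is_model xs, not_exists]
    refine forall_congr' fun x => ?_
    have h1 := eψ.realize_bd_iff (M := N) (v := v) (xs := Fin.snoc xs x)
    have h2 := hd N v (Fin.snoc xs x)
    rw [BoundedFormula.realize_not] at h2
    rw [h1, ← h2]
    exact not_not.symm
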